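/- Let G be a finite simple graph on vertex set V, let w : V → ℝ≥0 be a weight function, and fix a linear order on V along which w is non-increasing. Let s ≥ 1 and x ≥ 0 be real numbers, and let A ⊆ V be a vertex set that contains no nonempty subset that is s-principal in V and has average degree at least x in G. Define L = {v ∈ A : v has at least x neighbors u in A with u preceding v in the order}. Then ∑_{v∈L} w(v) ≤ (1/2)·∑_{v∈A} w(v) + (1/s)·∑_{v∈V} w(v). (The average degree of a nonempty set X in G is 2·e_G(X)/|X|, where e_G(X) is the number of edges of G with both endpoints in X.) -/

import Mathlib

/-- The set of the first `k` elements of the finite linearly ordered set `Y`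
(all of `Y` if `k > |Y|`). -/
def firstK {α : Type*} [LinearOrder α] (Y : Finset α) (k : ℕ) : Finset α :=
  ((Y.sort (· ≤ ·)).take k).toFinset

/-- For a real `s ≥ 1`, a subset `X ⊆ Y` is `s`-principal in `Y` if `X` is nonempty and
`X ⊆ Y_{⌊s·|X|⌋}`, i.e. all elements of `X` are among the first `⌊s·|X|⌋` elements of `Y`. -/
def IsPrincipal {α : Type*} [LinearOrder α] (s : ℝ) (Y X : Finset α) : Prop :=
  X.Nonempty ∧ X ⊆ firstK Y ⌊s * X.card⌋₊
open Classical in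
/-- The number of edges of `G` with both endpoints in `A`. -/
noncomputable def edgesIn {V : Type*} [Fintype V] [DecidableEq V] (G : SimpleGraph V)
    [DecidableRel G.Adj] (A : Finset V) : ℕ :=
  (G.edgeFinset.filter fun e => ∀ v ∈ e, v ∈ A).card

section AuxRk

variable {α : Type*} [Fintype α] [LinearOrder α]

/-- The rank of `v`: the number of elements strictly below it. -/
def rk (v : α) : ℕ := (Finset.univ.filter (· < v)).card

lemma rk_strictMono : StrictMono (rk (α := α)) := by
  intro u v huv
  apply Finset.card_lt_card
  constructor
  · intro a ha
    simp only [Finset.mem_filter, Finset.mem_univ, true_and] at *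
    exact ha.trans huv
  · intro hsub
    have := hsub (Finset.mem_filter.mpr ⟨Finset.mem_univ u, huv⟩)
    simp only [Finset.mem_filter] at this
    exact lt_irrefl u this.2

/-- The sorted list of all elements. -/
def slist (α : Type*) [Fintype α] [LinearOrder α] : List α := Finset.univ.sort (· ≤ ·)

lemma mem_slist (v : α) : v ∈ slist α := (Finset.mem_sort _).mpr (Finset.mem_univ v)
lemma slist_nodup : (slist α).Nodup := Finset.sort_nodup _ _
lemma slist_sorted : (slist α).SortedLT := Finset.sortedLT_sort _
lemma slist_length : (slist α).length = Fintype.card α := by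
  rw [slist, Finset.length_sort, Finset.card_univ]

lemma slist_lt_iff {i j : ℕ} (hi : i < (slist α).length) (hj : j < (slist α).length) :
    (slist α)[i] < (slist α)[j] ↔ i < j := by
  have h := (slist_sorted (α := α)).strictMono_get.lt_iff_lt (a := ⟨i, hi⟩) (b := ⟨j, hj⟩)
  simpa [List.get_eq_getElem, Fin.mk_lt_mk] using h

lemma rk_getElem {j : ℕ} (hj : j < (slist α).length) : rk ((slist α)[j]) = j := by
  classical
  have key : Finset.univ.filter (· < (slist α)[j]) = ((slist α).take j).toFinset := by
    ext u
    simp only [Finset.mem_filter, Finset.mem_univ, true_and, List.mem_toFinset]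
    constructor
    · intro hu
      obtain ⟨i, hi, rfl⟩ := List.mem_iff_getElem.mp (mem_slist u)
      have hij : i < j := (slist_lt_iff hi hj).mp hu
      have hi' : i < ((slist α).take j).length := by
        simpa [List.length_take] using lt_min hij hi
      have e : ((slist α).take j)[i] = (slist α)[i] := List.getElem_take
      exact e ▸ List.getElem_mem hi'
    · intro hu
      obtain ⟨i, hi, rfl⟩ := List.mem_iff_getElem.mp hu
      have hi2 : i < (slist α).length := by
        simp only [List.length_take, lt_min_iff] at hi; exact hi.2
      have hij : i < j := by
        simp only [List.length_take, lt_min_iff] at hi; exact hi.1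
      have e : ((slist α).take j)[i] = (slist α)[i] := List.getElem_take
      rw [e]
      exact (slist_lt_iff hi2 hj).mpr hij
  rw [rk, key, List.toFinset_card_of_nodup (slist_nodup.sublist (List.take_sublist _ _)),
    List.length_take]
  omega

lemma rk_lt (v : α) : rk v < Fintype.card α := by
  obtain ⟨j, hj, rfl⟩ := List.mem_iff_getElem.mp (mem_slist v)
  rw [rk_getElem hj]; rwa [slist_length] at hj

lemma mem_firstK {k : ℕ} {v : α} : v ∈ firstK (Finset.univ : Finset α) k ↔ rk v < k := by
  show v ∈ ((slist α).take k).toFinset ↔ _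
  rw [List.mem_toFinset]
  constructor
  · intro hv
    obtain ⟨i, hi, rfl⟩ := List.mem_iff_getElem.mp hv
    have hi2 : i < (slist α).length := by
      simp only [List.length_take, lt_min_iff] at hi; exact hi.2
    have hik : i < k := by
      simp only [List.length_take, lt_min_iff] at hi; exact hi.1
    have e : ((slist α).take k)[i] = (slist α)[i] := List.getElem_take
    rw [e, rk_getElem hi2]; exact hik
  · intro hv
    obtain ⟨j, hj, rfl⟩ := List.mem_iff_getElem.mp (mem_slist v)
    rw [rk_getElem hj] at hv
    have hj' : j < ((slist α).take k).length := by
      simp only [List.length_take, lt_min_iff]; exact ⟨hv, hj⟩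
    have e : ((slist α).take k)[j] = (slist α)[j] := List.getElem_take
    exact e ▸ List.getElem_mem hj'

lemma firstK_mono {k m : ℕ} (h : k ≤ m) :
    firstK (Finset.univ : Finset α) k ⊆ firstK (Finset.univ : Finset α) m := by
  intro v hv
  rw [mem_firstK] at *
  omega

lemma card_firstK (k : ℕ) :
    (firstK (Finset.univ : Finset α) k).card = min k (Fintype.card α) := by
  show ((slist α).take k).toFinset.card = _
  rw [List.toFinset_card_of_nodup (slist_nodup.sublist (List.take_sublist _ _)),
    List.length_take, slist_length]

/-- The weight sequence along the sorted order, `0` past the end. -/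
noncomputable def Wf (w : α → ℝ) (i : ℕ) : ℝ := ((slist α).map w).getD i 0

lemma Wf_rk (w : α → ℝ) (v : α) : Wf w (rk v) = w v := by
  obtain ⟨j, hj, rfl⟩ := List.mem_iff_getElem.mp (mem_slist v)
  rw [rk_getElem hj, Wf, List.getD_eq_getElem _ _ (by simpa using hj), List.getElem_map]

lemma Wf_card (w : α → ℝ) : Wf (α := α) w (Fintype.card α) = 0 :=
  List.getD_eq_default _ _ (by simp [slist_length])

lemma Wf_step (w : α → ℝ) (hw0 : ∀ v, 0 ≤ w v) (hmono : ∀ a b : α, a ≤ b → w b ≤ w a)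
    {i : ℕ} (hi : i < Fintype.card α) : Wf w (i + 1) ≤ Wf w i := by
  have hi' : i < (slist α).length := by rwa [slist_length]
  have hWi : Wf w i = w ((slist α)[i]) := by
    rw [Wf, List.getD_eq_getElem _ _ (by simpa using hi'), List.getElem_map]
  rcases lt_or_ge (i + 1) (slist α).length with h | h
  · have hW1 : Wf w (i + 1) = w ((slist α)[i + 1]) := by
      rw [Wf, List.getD_eq_getElem _ _ (by simpa using h), List.getElem_map]
    rw [hWi, hW1]
    exact hmono _ _ (le_of_lt ((slist_lt_iff hi' h).mpr (Nat.lt_succ_self i)))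
  · have hW1 : Wf w (i + 1) = 0 := List.getD_eq_default _ _ (by simpa using h)
    rw [hWi, hW1]
    exact hw0 _

lemma tele (g : ℕ → ℝ) {m n : ℕ} (h : m ≤ n) :
    ∑ i ∈ Finset.Ico m n, (g i - g (i + 1)) = g m - g n := by
  induction n with
  | zero => simp [Nat.le_zero.mp h]
  | succ n ih =>
    rcases Nat.lt_or_ge m (n + 1) with h' | h'
    · have hm : m ≤ n := Nat.lt_succ_iff.mp h'
      rw [Finset.sum_Ico_succ_top hm, ih hm]; ring
    · have hmn : m = n + 1 := le_antisymm h h'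
      subst hmn; simp

lemma abel_sum (w : α → ℝ) (S : Finset α) :
    ∑ v ∈ S, w v = ∑ i ∈ Finset.range (Fintype.card α),
      (Wf w i - Wf w (i + 1)) * ((S ∩ firstK Finset.univ (i + 1)).card : ℝ) := by
  classical
  have h1 : ∀ v ∈ S, w v = ∑ i ∈ Finset.range (Fintype.card α),
      (if rk v ≤ i then Wf w i - Wf w (i + 1) else 0) := by
    intro v _
    have hIco : (Finset.range (Fintype.card α)).filter (fun i => rk v ≤ i)
        = Finset.Ico (rk v) (Fintype.card α) := by
      ext i
      simp only [Finset.mem_filter, Finset.mem_range, Finset.mem_Ico]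
      omega
    calc w v = Wf w (rk v) - Wf w (Fintype.card α) := by rw [Wf_card, Wf_rk]; ring
      _ = ∑ i ∈ Finset.Ico (rk v) (Fintype.card α), (Wf w i - Wf w (i + 1)) :=
        (tele _ (rk_lt v).le).symm
      _ = ∑ i ∈ (Finset.range (Fintype.card α)).filter (fun i => rk v ≤ i),
            (Wf w i - Wf w (i + 1)) := by rw [hIco]
      _ = _ := Finset.sum_filter _ _
  rw [Finset.sum_congr rfl h1, Finset.sum_comm]
  refine Finset.sum_congr rfl fun i _ => ?_
  have h2 : ∀ v ∈ S, (if rk v ≤ i then Wf w i - Wf w (i + 1) else 0)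
      = (if v ∈ firstK (Finset.univ : Finset α) (i + 1) then Wf w i - Wf w (i + 1) else 0) := by
    intro v _
    congr 1
    simp only [mem_firstK, eq_iff_iff, Nat.lt_succ_iff]
  rw [Finset.sum_congr rfl h2, Finset.sum_ite_mem, Finset.sum_const, nsmul_eq_mul, mul_comm]

end AuxRk

open Classical in
lemma counting {V : Type*} [Fintype V] [LinearOrder V]
    (G : SimpleGraph V) [DecidableRel G.Adj]
    (s x : ℝ) (hs : 1 ≤ s) (hx : 0 ≤ x) (A : Finset V)
    (hA : ∀ X ⊆ A, ¬ (IsPrincipal s Finset.univ X ∧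
          x ≤ 2 * (edgesIn G X : ℝ) / X.card)) (k : ℕ) :
    (((A.filter (fun v => x ≤ ((A.filter fun u => u < v ∧ G.Adj u v).card : ℝ)))
        ∩ firstK Finset.univ k).card : ℝ)
      ≤ ((A ∩ firstK Finset.univ k).card : ℝ) / 2 + k / s := by
  have hs0 : (0 : ℝ) < s := lt_of_lt_of_le one_pos hs
  set L := A.filter (fun v => x ≤ ((A.filter fun u => u < v ∧ G.Adj u v).card : ℝ)) with hLdef
  set P := firstK (Finset.univ : Finset V) k with hPdef
  set X := A ∩ P with hXdef
  set Lk := L ∩ P with hLkdef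
  have hLX : Lk ⊆ X := by
    intro v hv
    rw [hLkdef, Finset.mem_inter] at hv
    rw [hXdef, Finset.mem_inter]
    exact ⟨Finset.mem_of_mem_filter _ hv.1, hv.2⟩
  have hks : (0 : ℝ) ≤ (k : ℝ) / s := by positivity
  rcases X.eq_empty_or_nonempty with hX | hX
  · have : Lk = ∅ := Finset.subset_empty.mp (hX ▸ hLX)
    rw [this]
    simp only [Finset.card_empty, Nat.cast_zero]
    positivity
  · have hc0 : (0 : ℝ) < (X.card : ℝ) := by
      exact_mod_cast Finset.card_pos.mpr hX
    rcases le_or_gt (k : ℝ) (s * X.card) with hk | hk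
    · -- X is principal
      have hprin : IsPrincipal s Finset.univ X := by
        refine ⟨hX, fun v hv => ?_⟩
        have hvP : v ∈ P := (Finset.mem_inter.mp hv).2
        exact firstK_mono (Nat.le_floor (by exact_mod_cast hk)) hvP
      have hlt : 2 * (edgesIn G X : ℝ) / X.card < x :=
        not_le.mp fun h => hA X Finset.inter_subset_left ⟨hprin, h⟩
      have hlt' : 2 * (edgesIn G X : ℝ) < x * X.card := (div_lt_iff₀ hc0).mp hlt
      -- edge counting
      have hnat : (∑ v ∈ Lk, (A.filter fun u => u < v ∧ G.Adj u v).card) ≤ edgesIn G X := by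
        unfold edgesIn
        set t : V → Finset (Sym2 V) :=
          fun v => (A.filter fun u => u < v ∧ G.Adj u v).image (fun u => s(u, v)) with htdef
        have hcard : ∀ v, (t v).card = (A.filter fun u => u < v ∧ G.Adj u v).card := by
          intro v
          apply Finset.card_image_of_injOn
          intro a ha b hb hab
          simp only [Finset.mem_coe, Finset.mem_filter] at ha hb
          rcases Sym2.eq_iff.mp hab with ⟨h1, _⟩ | ⟨h1, h2⟩
          · exact h1
          · exact absurd (h1 ▸ ha.2.1) (lt_irrefl v)
        have hdisj : ∀ v ∈ Lk, ∀ v' ∈ Lk, v ≠ v' → Disjoint (t v) (t v') := by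
          intro v _ v' _ hne
          rw [Finset.disjoint_left]
          intro e he he'
          simp only [htdef, Finset.mem_image, Finset.mem_filter] at he he'
          obtain ⟨a, ⟨_, hav, _⟩, rfl⟩ := he
          obtain ⟨b, ⟨_, hbv, _⟩, hb⟩ := he'
          rcases Sym2.eq_iff.mp hb with ⟨_, h2⟩ | ⟨h1, h2⟩
          · exact hne h2.symm
          · rw [h1, h2] at hbv
            exact absurd (hav.trans hbv) (lt_irrefl a)
        have hsub2 : Lk.biUnion t ⊆ G.edgeFinset.filter (fun e => ∀ v ∈ e, v ∈ X) := by
          intro e he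
          obtain ⟨v, hvLk, hevt⟩ := Finset.mem_biUnion.mp he
          simp only [htdef, Finset.mem_image, Finset.mem_filter] at hevt
          obtain ⟨u, ⟨huA, huv, hadj⟩, rfl⟩ := hevt
          have hvP : v ∈ P := (Finset.mem_inter.mp hvLk).2
          have hvX : v ∈ X := hLX hvLk
          have huP : u ∈ P := by
            rw [hPdef, mem_firstK] at hvP ⊢
            exact lt_trans (rk_strictMono huv) hvP
          have huX : u ∈ X := Finset.mem_inter.mpr ⟨huA, huP⟩
          rw [Finset.mem_filter]
          constructor
          · rw [SimpleGraph.mem_edgeFinset]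
            exact hadj
          · intro z hz
            rcases Sym2.mem_iff.mp hz with rfl | rfl
            · exact huX
            · exact hvX
        calc (∑ v ∈ Lk, (A.filter fun u => u < v ∧ G.Adj u v).card)
            = ∑ v ∈ Lk, (t v).card := by
              exact Finset.sum_congr rfl fun v _ => (hcard v).symm
          _ = (Lk.biUnion t).card := (Finset.card_biUnion hdisj).symm
          _ ≤ _ := Finset.card_le_card hsub2
      have hEcount : x * (Lk.card : ℝ) ≤ (edgesIn G X : ℝ) := by
        calc x * (Lk.card : ℝ) = ∑ _v ∈ Lk, x := by
              rw [Finset.sum_const, nsmul_eq_mul, mul_comm]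
          _ ≤ ∑ v ∈ Lk, ((A.filter fun u => u < v ∧ G.Adj u v).card : ℝ) := by
              refine Finset.sum_le_sum fun v hv => ?_
              have hvL : v ∈ L := (Finset.mem_inter.mp hv).1
              exact (Finset.mem_filter.mp hvL).2
          _ = ((∑ v ∈ Lk, (A.filter fun u => u < v ∧ G.Adj u v).card : ℕ) : ℝ) := by
              rw [Nat.cast_sum]
          _ ≤ (edgesIn G X : ℝ) := by exact_mod_cast hnat
      rcases hx.eq_or_lt with hx0 | hxpos
      · exfalso
        rw [← hx0] at hlt'
        simp only [zero_mul] at hlt'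
        have : (0 : ℝ) ≤ (edgesIn G X : ℝ) := Nat.cast_nonneg _
        linarith
      · have h2 : x * (2 * (Lk.card : ℝ)) < x * (X.card : ℝ) := by
          have := lt_of_le_of_lt (by linarith [hEcount] : x * (2 * (Lk.card : ℝ)) ≤ 2 * (edgesIn G X : ℝ)) hlt'
          exact this
        have h3 : 2 * (Lk.card : ℝ) < (X.card : ℝ) := lt_of_mul_lt_mul_left h2 hxpos.le
        linarith
    · have h1 : (X.card : ℝ) < k / s := (lt_div_iff₀ hs0).mpr (by linarith)
      have h2 : (Lk.card : ℝ) ≤ (X.card : ℝ) := by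
        exact_mod_cast Finset.card_le_card hLX
      linarith

open Classical in
theorem weight_of_high_backdegree_vertices {V : Type*} [Fintype V] [LinearOrder V]
    (G : SimpleGraph V) [DecidableRel G.Adj]
    (w : V → ℝ) (hw0 : ∀ v, 0 ≤ w v)
    (hmono : ∀ a b : V, a ≤ b → w b ≤ w a)
    (s x : ℝ) (hs : 1 ≤ s) (hx : 0 ≤ x) (A : Finset V)
    (hA : ∀ X ⊆ A, ¬ (IsPrincipal s Finset.univ X ∧
          x ≤ 2 * (edgesIn G X : ℝ) / X.card)) :
    ∑ v ∈ A.filter (fun v => x ≤ ((A.filter fun u => u < v ∧ G.Adj u v).card : ℝ)), w v ≤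
      (1 / 2) * ∑ v ∈ A, w v + (1 / s) * ∑ v, w v := by
  have hs0 : (0 : ℝ) < s := lt_of_lt_of_le one_pos hs
  rw [abel_sum w (A.filter (fun v => x ≤ ((A.filter fun u => u < v ∧ G.Adj u v).card : ℝ))),
    abel_sum w A, abel_sum w Finset.univ, Finset.mul_sum, Finset.mul_sum,
    ← Finset.sum_add_distrib]
  apply Finset.sum_le_sum
  intro i hi
  have hin : i < Fintype.card V := Finset.mem_range.mp hi
  have hd : 0 ≤ Wf w i - Wf w (i + 1) := sub_nonneg.mpr (Wf_step w hw0 hmono hin)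
  have hcnt := counting G s x hs hx A hA (i + 1)
  have hU : (((Finset.univ : Finset V) ∩ firstK Finset.univ (i + 1)).card : ℝ) = ((i : ℝ) + 1) := by
    rw [Finset.univ_inter, card_firstK, min_eq_left (by omega)]
    push_cast
    ring
  rw [hU]
  have hmul := mul_le_mul_of_nonneg_left hcnt hd
  push_cast at hmul
  calc (Wf w i - Wf w (i + 1)) *
        (((A.filter (fun v => x ≤ ((A.filter fun u => u < v ∧ G.Adj u v).card : ℝ)))
          ∩ firstK Finset.univ (i + 1)).card : ℝ)
      ≤ (Wf w i - Wf w (i + 1)) *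
        (((A ∩ firstK Finset.univ (i + 1)).card : ℝ) / 2 + ((i : ℝ) + 1) / s) := hmul
    _ = 1 / 2 * ((Wf w i - Wf w (i + 1)) * ((A ∩ firstK Finset.univ (i + 1)).card : ℝ))
        + 1 / s * ((Wf w i - Wf w (i + 1)) * ((i : ℝ) + 1)) := by ring
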